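/- Let B be a finite set. The map (A, I) ↦ (A, I_A), where I_A denotes the partition of A induced by I, is a bijection from the set of pairs (A, I) with I a partition of B and A a subset of B adapted to I, onto the set of pairs (A, J) with A a subset of B and J a partition of A. Its inverse is (A, J) ↦ (A, J ⊔ {{i} : i ∈ B \ A}). -/
import Mathlib


/-- `𝓘` is a partition of the finite set `B`. -/
def IsPartitionOf {α : Type*} (B : Finset α) (𝓘 : Finset (Finset α)) : Prop :=
  (∀ I ∈ 𝓘, I.Nonempty) ∧ (∀ I ∈ 𝓘, I ⊆ B) ∧ ∀ a ∈ B, ∃! I, I ∈ 𝓘 ∧ a ∈ I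

/-- The partition of `A` induced by `𝓘`: the nonempty traces `I ∩ A` of blocks of `𝓘`. -/
def inducedPart {α : Type*} [DecidableEq α] (A : Finset α) (𝓘 : Finset (Finset α)) :
    Finset (Finset α) :=
  (𝓘.image (fun I => I ∩ A)).filter (fun J => J.Nonempty)

/-- `A` is adapted to the partition `𝓘` of `B`: every block of cardinality `≥ 2` is
contained in `A`. -/
def Adapted {α : Type*} (𝓘 : Finset (Finset α)) (A : Finset α) : Prop :=
  ∀ I ∈ 𝓘, 2 ≤ I.card → I ⊆ A

section aux
variable {α : Type*} [DecidableEq α] {B A : Finset α} {𝓘 𝓙 : Finset (Finset α)}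

lemma aux_key (hP : IsPartitionOf B 𝓘) (hAd : Adapted 𝓘 A) {I : Finset α}
    (hI : I ∈ 𝓘) (h : (I ∩ A).Nonempty) : I ⊆ A := by
  rcases le_or_gt 2 I.card with h2 | h2
  · exact hAd I hI h2
  · obtain ⟨x, hx⟩ := h
    rw [Finset.mem_inter] at hx
    intro y hy
    have : y = x := Finset.card_le_one.mp (by omega) y hy x hx.1
    rw [this]; exact hx.2

lemma aux_induced_eq (hP : IsPartitionOf B 𝓘) (hAd : Adapted 𝓘 A) :
    inducedPart A 𝓘 = 𝓘.filter (· ⊆ A) := by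
  ext J
  simp only [inducedPart, Finset.mem_filter, Finset.mem_image]
  constructor
  · rintro ⟨⟨I, hI, rfl⟩, hne⟩
    have hsub := aux_key hP hAd hI hne
    rw [Finset.inter_eq_left.mpr hsub]
    exact ⟨hI, hsub⟩
  · rintro ⟨hJ, hsub⟩
    exact ⟨⟨J, hJ, Finset.inter_eq_left.mpr hsub⟩,
      hP.1 J hJ⟩

lemma aux_singleton (hP : IsPartitionOf B 𝓘) (hAd : Adapted 𝓘 A) {x : α}
    (hx : x ∈ B \ A) : ({x} : Finset α) ∈ 𝓘 ∧ ∀ I ∈ 𝓘, x ∈ I → I = {x} := by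
  rw [Finset.mem_sdiff] at hx
  obtain ⟨I, ⟨hI, hxI⟩, huniq⟩ := hP.2.2 x hx.1
  have hIx : I = {x} := by
    have hsub : ¬ (I ∩ A).Nonempty := fun h => hx.2 (aux_key hP hAd hI h hxI)
    have h2 : I.card ≤ 1 := by
      by_contra h
      exact hsub ⟨x, Finset.mem_inter.mpr ⟨hxI, hAd I hI (by omega) hxI⟩⟩
    exact Finset.eq_singleton_iff_unique_mem.mpr
      ⟨hxI, fun y hy => Finset.card_le_one.mp h2 y hy x hxI⟩
  refine ⟨hIx ▸ hI, fun J hJ hxJ => ?_⟩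
  rw [huniq J ⟨hJ, hxJ⟩, hIx]

/-- Forward: target membership. -/
lemma aux_fwd (hP : IsPartitionOf B 𝓘) (hAB : A ⊆ B) (hAd : Adapted 𝓘 A) :
    IsPartitionOf A (inducedPart A 𝓘) := by
  rw [aux_induced_eq hP hAd]
  refine ⟨fun I hI => hP.1 I (Finset.mem_filter.mp hI).1,
    fun I hI => (Finset.mem_filter.mp hI).2, fun a ha => ?_⟩
  obtain ⟨I, ⟨hI, haI⟩, huniq⟩ := hP.2.2 a (hAB ha)
  have hsub : I ⊆ A := aux_key hP hAd hI ⟨a, Finset.mem_inter.mpr ⟨haI, ha⟩⟩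
  exact ⟨I, ⟨Finset.mem_filter.mpr ⟨hI, hsub⟩, haI⟩,
    fun J ⟨hJ, haJ⟩ => huniq J ⟨(Finset.mem_filter.mp hJ).1, haJ⟩⟩

/-- Left inverse identity. -/
lemma aux_left (hP : IsPartitionOf B 𝓘) (hAB : A ⊆ B) (hAd : Adapted 𝓘 A) :
    inducedPart A 𝓘 ∪ (B \ A).image (fun i => ({i} : Finset α)) = 𝓘 := by
  rw [aux_induced_eq hP hAd]
  ext I
  simp only [Finset.mem_union, Finset.mem_filter, Finset.mem_image]
  constructor
  · rintro (⟨hI, _⟩ | ⟨x, hx, rfl⟩)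
    · exact hI
    · exact (aux_singleton hP hAd hx).1
  · intro hI
    by_cases h : (I ∩ A).Nonempty
    · exact Or.inl ⟨hI, aux_key hP hAd hI h⟩
    · obtain ⟨x, hxI⟩ := hP.1 I hI
      have hxA : x ∉ A := fun hxA => h ⟨x, Finset.mem_inter.mpr ⟨hxI, hxA⟩⟩
      have hxB : x ∈ B \ A := Finset.mem_sdiff.mpr ⟨hP.2.1 I hI hxI, hxA⟩
      exact Or.inr ⟨x, hxB, ((aux_singleton hP hAd hxB).2 I hI hxI).symm⟩

/-- Backward: source membership. -/
lemma aux_bwd (hAB : A ⊆ B) (hJ : IsPartitionOf A 𝓙) :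
    IsPartitionOf B (𝓙 ∪ (B \ A).image (fun i => ({i} : Finset α))) ∧
    Adapted (𝓙 ∪ (B \ A).image (fun i => ({i} : Finset α))) A := by
  constructor
  · refine ⟨?_, ?_, ?_⟩
    · intro I hI
      rcases Finset.mem_union.mp hI with h | h
      · exact hJ.1 I h
      · obtain ⟨x, _, rfl⟩ := Finset.mem_image.mp h
        exact Finset.singleton_nonempty x
    · intro I hI
      rcases Finset.mem_union.mp hI with h | h
      · exact (hJ.2.1 I h).trans hAB
      · obtain ⟨x, hx, rfl⟩ := Finset.mem_image.mp h
        exact Finset.singleton_subset_iff.mpr (Finset.mem_sdiff.mp hx).1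
    · intro a ha
      by_cases haA : a ∈ A
      · obtain ⟨I, ⟨hI, haI⟩, huniq⟩ := hJ.2.2 a haA
        refine ⟨I, ⟨Finset.mem_union_left _ hI, haI⟩, ?_⟩
        rintro J ⟨hJ', haJ⟩
        rcases Finset.mem_union.mp hJ' with h | h
        · exact huniq J ⟨h, haJ⟩
        · obtain ⟨x, hx, rfl⟩ := Finset.mem_image.mp h
          exact absurd (Finset.mem_singleton.mp haJ ▸ haA)
            (Finset.mem_singleton.mp haJ ▸ (Finset.mem_sdiff.mp hx).2)
      · refine ⟨{a}, ⟨Finset.mem_union_right _ (Finset.mem_image.mpr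
          ⟨a, Finset.mem_sdiff.mpr ⟨ha, haA⟩, rfl⟩), Finset.mem_singleton_self a⟩, ?_⟩
        rintro J ⟨hJ', haJ⟩
        rcases Finset.mem_union.mp hJ' with h | h
        · exact absurd (hJ.2.1 J h haJ) haA
        · obtain ⟨x, hx, rfl⟩ := Finset.mem_image.mp h
          rw [Finset.mem_singleton.mp haJ]
  · intro I hI h2
    rcases Finset.mem_union.mp hI with h | h
    · exact hJ.2.1 I h
    · obtain ⟨x, _, rfl⟩ := Finset.mem_image.mp h
      simp at h2

/-- Right inverse identity. -/
lemma aux_right (hAB : A ⊆ B) (hJ : IsPartitionOf A 𝓙) :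
    inducedPart A (𝓙 ∪ (B \ A).image (fun i => ({i} : Finset α))) = 𝓙 := by
  ext J
  simp only [inducedPart, Finset.mem_filter, Finset.mem_image, Finset.mem_union]
  constructor
  · rintro ⟨⟨I, hI, rfl⟩, hne⟩
    rcases hI with h | h
    · rwa [Finset.inter_eq_left.mpr (hJ.2.1 I h)]
    · obtain ⟨x, hx, rfl⟩ := h
      exfalso
      obtain ⟨y, hy⟩ := hne
      rw [Finset.mem_inter, Finset.mem_singleton] at hy
      exact (Finset.mem_sdiff.mp hx).2 (hy.1 ▸ hy.2)
  · intro hJ'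
    exact ⟨⟨J, Or.inl hJ', Finset.inter_eq_left.mpr (hJ.2.1 J hJ')⟩,
      hJ.1 J hJ'⟩

end aux

/-- The map `(A, 𝓘) ↦ (A, 𝓘_A)` is a bijection from the set of pairs `(A, 𝓘)` with `𝓘` a
partition of `B` and `A ⊆ B` adapted to `𝓘`, onto the set of pairs `(A, 𝓙)` with `A ⊆ B`
and `𝓙` a partition of `A`; its inverse is `(A, 𝓙) ↦ (A, 𝓙 ⊔ {{i} : i ∈ B \ A})`. -/
theorem stmt_3 {α : Type*} [DecidableEq α] (B : Finset α) :
    Set.BijOn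
      (fun q : Finset α × Finset (Finset α) => (q.1, inducedPart q.1 q.2))
      {q | IsPartitionOf B q.2 ∧ q.1 ⊆ B ∧ Adapted q.2 q.1}
      {q | q.1 ⊆ B ∧ IsPartitionOf q.1 q.2} ∧
    Set.InvOn
      (fun q : Finset α × Finset (Finset α) =>
        (q.1, q.2 ∪ (B \ q.1).image (fun i => ({i} : Finset α))))
      (fun q : Finset α × Finset (Finset α) => (q.1, inducedPart q.1 q.2))
      {q | IsPartitionOf B q.2 ∧ q.1 ⊆ B ∧ Adapted q.2 q.1}
      {q | q.1 ⊆ B ∧ IsPartitionOf q.1 q.2} := by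
  have hMapsTo : Set.MapsTo
      (fun q : Finset α × Finset (Finset α) => (q.1, inducedPart q.1 q.2))
      {q | IsPartitionOf B q.2 ∧ q.1 ⊆ B ∧ Adapted q.2 q.1}
      {q | q.1 ⊆ B ∧ IsPartitionOf q.1 q.2} := by
    rintro ⟨A, 𝓘⟩ ⟨hP, hAB, hAd⟩
    exact ⟨hAB, aux_fwd hP hAB hAd⟩
  have hMapsTo' : Set.MapsTo
      (fun q : Finset α × Finset (Finset α) =>
        (q.1, q.2 ∪ (B \ q.1).image (fun i => ({i} : Finset α))))
      {q | q.1 ⊆ B ∧ IsPartitionOf q.1 q.2}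
      {q | IsPartitionOf B q.2 ∧ q.1 ⊆ B ∧ Adapted q.2 q.1} := by
    rintro ⟨A, 𝓙⟩ ⟨hAB, hJ⟩
    obtain ⟨h1, h2⟩ := aux_bwd hAB hJ
    exact ⟨h1, hAB, h2⟩
  have hInv : Set.InvOn
      (fun q : Finset α × Finset (Finset α) =>
        (q.1, q.2 ∪ (B \ q.1).image (fun i => ({i} : Finset α))))
      (fun q : Finset α × Finset (Finset α) => (q.1, inducedPart q.1 q.2))
      {q | IsPartitionOf B q.2 ∧ q.1 ⊆ B ∧ Adapted q.2 q.1}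
      {q | q.1 ⊆ B ∧ IsPartitionOf q.1 q.2} := by
    constructor
    · rintro ⟨A, 𝓘⟩ ⟨hP, hAB, hAd⟩
      exact Prod.ext rfl (aux_left hP hAB hAd)
    · rintro ⟨A, 𝓙⟩ ⟨hAB, hJ⟩
      exact Prod.ext rfl (aux_right hAB hJ)
  exact ⟨hInv.bijOn hMapsTo hMapsTo', hInv⟩
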